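/- Let (X,d) be a compact metric space and f : X → X a topologically transitive expansive homeomorphism. Then the following are equivalent: (1) f has the shadowing property; (2) f has the limit shadowing property; (3) f has the two-sided limit shadowing property with a gap. -/

import Mathlib

open Filter Topology

variable {X : Type*} [MetricSpace X]

/-- `f` is expansive, with some expansivity constant `ε > 0`. -/
def Expansive (f : X ≃ X) : Prop :=
  ∃ ε : ℝ, 0 < ε ∧ ∀ x y : X, (∀ n : ℤ, dist ((f ^ n) x) ((f ^ n) y) ≤ ε) → x = y

/-- `g` is topologically transitive. -/
def TopologicallyTransitive (g : X → X) : Prop :=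
  ∀ U V : Set X, IsOpen U → IsOpen V → U.Nonempty → V.Nonempty →
    ∃ N : ℕ, 0 < N ∧ (g^[N] '' U ∩ V).Nonempty

/-- The (two-sided) shadowing property for a bijection `f`. -/
def ShadowingPropertyZ (f : X ≃ X) : Prop :=
  ∀ ε : ℝ, 0 < ε → ∃ δ : ℝ, 0 < δ ∧ ∀ x : ℤ → X,
    (∀ i : ℤ, dist (f (x i)) (x (i + 1)) < δ) →
    ∃ y : X, ∀ i : ℤ, dist ((f ^ i) y) (x i) < ε

/-- The limit shadowing property for a map `g`. -/
def LimitShadowing (g : X → X) : Prop :=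
  ∀ x : ℕ → X,
    Tendsto (fun i : ℕ => dist (g (x i)) (x (i + 1))) atTop (𝓝 0) →
    ∃ y : X, Tendsto (fun i : ℕ => dist (g^[i] y) (x i)) atTop (𝓝 0)

/-- A two-sided limit pseudo-orbit: `d(f(x i), x (i+1)) → 0` as `|i| → ∞`. -/
def IsTwoSidedLimitPseudoOrbit (f : X ≃ X) (x : ℤ → X) : Prop :=
  Tendsto (fun i : ℤ => dist (f (x i)) (x (i + 1))) cofinite (𝓝 0)

/-- The sequence `x` is two-sided limit shadowed with gap `K`. -/
def TwoSidedLimitShadowedWithGap (f : X ≃ X) (x : ℤ → X) (K : ℤ) : Prop :=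
  ∃ y : X,
    Tendsto (fun i : ℤ => dist ((f ^ i) y) (x i)) atBot (𝓝 0) ∧
    Tendsto (fun i : ℤ => dist ((f ^ (K + i)) y) (x i)) atTop (𝓝 0)

/-- `f` has the two-sided limit shadowing property with a gap. -/
def TwoSidedLimitShadowingWithGap (f : X ≃ X) : Prop :=
  ∃ N : ℕ, ∀ x : ℤ → X, IsTwoSidedLimitPseudoOrbit f x →
    ∃ K : ℤ, |K| ≤ (N : ℤ) ∧ TwoSidedLimitShadowedWithGap f x K

lemma zpow_nat_coe (g : X ≃ₜ X) (n : ℕ) : ⇑(g.toEquiv ^ (n:ℤ)) = (⇑g)^[n] := by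
  rw [zpow_natCast]
  exact (Equiv.Perm.iterate_eq_pow g.toEquiv n).symm
lemma zpow_neg_coe (g : X ≃ₜ X) (n : ℕ) : ⇑(g.toEquiv ^ (-(n:ℤ))) = (⇑g.symm)^[n] := by
  have : g.toEquiv ^ (-(n:ℤ)) = (g.toEquiv⁻¹) ^ (n:ℤ) := by
    rw [inv_zpow, zpow_neg]
  rw [this]
  exact zpow_nat_coe g.symm n
lemma zpow_cont (g : X ≃ₜ X) (i : ℤ) : Continuous ⇑(g.toEquiv ^ i) := by
  rcases le_or_gt 0 i with h | h
  · obtain ⟨n, rfl⟩ := Int.eq_ofNat_of_zero_le h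
    rw [zpow_nat_coe]
    exact g.continuous.iterate n
  · obtain ⟨n, rfl⟩ : ∃ n : ℕ, i = -(n:ℤ) := ⟨i.natAbs, by omega⟩
    rw [zpow_neg_coe]
    exact g.symm.continuous.iterate n
lemma zpow_add_apply (g : X ≃ₜ X) (a b : ℤ) (x : X) :
    (g.toEquiv ^ (a + b)) x = (g.toEquiv ^ a) ((g.toEquiv ^ b) x) := by
  rw [zpow_add]; rfl

lemma tends_nat (u : ℕ → ℝ) (h : ∀ n, 0 ≤ u n) :
    Tendsto u atTop (𝓝 0) ↔ ∀ ε > 0, ∃ N : ℕ, ∀ n ≥ N, u n < ε := by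
  rw [Metric.tendsto_atTop]
  constructor
  · intro H ε hε; obtain ⟨N, hN⟩ := H ε hε
    exact ⟨N, fun n hn => by have := hN n hn; rwa [Real.dist_eq, sub_zero, abs_of_nonneg (h n)] at this⟩
  · intro H ε hε; obtain ⟨N, hN⟩ := H ε hε
    exact ⟨N, fun n hn => by rw [Real.dist_eq, sub_zero, abs_of_nonneg (h n)]; exact hN n hn⟩

lemma tends_int_atTop (u : ℤ → ℝ) (h : ∀ n, 0 ≤ u n) :
    Tendsto u atTop (𝓝 0) ↔ ∀ ε > 0, ∃ N : ℤ, ∀ n ≥ N, u n < ε := by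
  rw [Metric.tendsto_atTop]
  constructor
  · intro H ε hε; obtain ⟨N, hN⟩ := H ε hε
    exact ⟨N, fun n hn => by have := hN n hn; rwa [Real.dist_eq, sub_zero, abs_of_nonneg (h n)] at this⟩
  · intro H ε hε; obtain ⟨N, hN⟩ := H ε hε
    exact ⟨N, fun n hn => by rw [Real.dist_eq, sub_zero, abs_of_nonneg (h n)]; exact hN n hn⟩

lemma tends_int_atBot (u : ℤ → ℝ) (h : ∀ n, 0 ≤ u n) :
    Tendsto u atBot (𝓝 0) ↔ ∀ ε > 0, ∃ N : ℤ, ∀ n ≤ N, u n < ε := by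
  have : Tendsto u atBot (𝓝 0) ↔ Tendsto (fun n : ℤ => u (-n)) atTop (𝓝 0) := by
    constructor
    · intro H; exact H.comp tendsto_neg_atTop_atBot
    · intro H
      have := H.comp tendsto_neg_atBot_atTop
      have h2 : ((fun n : ℤ => u (-n)) ∘ Neg.neg) = u := by
        funext n; simp
      rwa [h2] at this
  rw [this, Metric.tendsto_atTop]
  constructor
  · intro H ε hε
    obtain ⟨N, hN⟩ := H ε hε
    refine ⟨-N, fun n hn => ?_⟩
    have := hN (-n) (by omega)
    rwa [Real.dist_eq, sub_zero, abs_of_nonneg (h _), neg_neg] at this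
  · intro H ε hε
    obtain ⟨N, hN⟩ := H ε hε
    refine ⟨-N, fun n hn => ?_⟩
    rw [Real.dist_eq, sub_zero, abs_of_nonneg (h _)]
    exact hN (-n) (by omega)

lemma tends_cofinite (u : ℤ → ℝ) :
    Tendsto u cofinite (𝓝 0) ↔ Tendsto u atBot (𝓝 0) ∧ Tendsto u atTop (𝓝 0) := by
  rw [Int.cofinite_eq, tendsto_sup]

lemma asymp [CompactSpace X] (g : X ≃ₜ X) {c : ℝ}
    (hexp : ∀ x y : X, (∀ n : ℤ, dist ((g.toEquiv ^ n) x) ((g.toEquiv ^ n) y) ≤ c) → x = y)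
    (u v : X) (h : ∀ n : ℕ, dist ((⇑g)^[n] u) ((⇑g)^[n] v) ≤ c) :
    ∀ η > 0, ∃ N : ℕ, ∀ n ≥ N, dist ((⇑g)^[n] u) ((⇑g)^[n] v) < η := by
  by_contra hcon
  push_neg at hcon
  obtain ⟨η, hη, hfreq⟩ := hcon
  choose φ hφ1 hφ2 using hfreq
  set w : ℕ → X × X := fun k => ((⇑g)^[φ k] u, (⇑g)^[φ k] v) with hw
  obtain ⟨pq, -, ψ, hψ, hten⟩ := isCompact_univ.tendsto_subseq (fun k => Set.mem_univ (w k))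
  obtain ⟨p, q⟩ := pq
  have htenp : Tendsto (fun k => (⇑g)^[φ (ψ k)] u) atTop (𝓝 p) :=
    (continuous_fst.tendsto _).comp hten
  have htenq : Tendsto (fun k => (⇑g)^[φ (ψ k)] v) atTop (𝓝 q) :=
    (continuous_snd.tendsto _).comp hten
  have hnk : ∀ k : ℕ, (k : ℤ) ≤ (φ (ψ k) : ℤ) := by
    intro k
    have h1 : k ≤ ψ k := hψ.le_apply
    have h2 : ψ k ≤ φ (ψ k) := hφ1 (ψ k)
    exact_mod_cast le_trans h1 h2
  have hpq : p = q := by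
    apply hexp
    intro m
    have hc1 : Tendsto (fun k : ℕ => dist ((g.toEquiv ^ m) ((⇑g)^[φ (ψ k)] u))
        ((g.toEquiv ^ m) ((⇑g)^[φ (ψ k)] v))) atTop
        (𝓝 (dist ((g.toEquiv ^ m) p) ((g.toEquiv ^ m) q))) :=
      (((zpow_cont g m).tendsto _).comp htenp).dist (((zpow_cont g m).tendsto _).comp htenq)
    refine le_of_tendsto hc1 ?_
    filter_upwards [eventually_ge_atTop m.natAbs] with k hk
    have hm : (0:ℤ) ≤ m + (φ (ψ k) : ℤ) := by
      have := hnk k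
      omega
    have hj : (((m + (φ (ψ k):ℤ)).toNat : ℕ) : ℤ) = m + (φ (ψ k):ℤ) := by omega
    have key : ∀ z : X, (g.toEquiv ^ m) ((⇑g)^[φ (ψ k)] z) = (⇑g)^[(m + (φ (ψ k):ℤ)).toNat] z := by
      intro z
      rw [← zpow_nat_coe g (φ (ψ k)), ← zpow_add_apply, ← hj, zpow_nat_coe g]
      have hs : (m + (φ (ψ k):ℤ)) ⊔ 0 = m + (φ (ψ k):ℤ) := sup_eq_left.2 hm
      simp only [Int.toNat_natCast]
    rw [key u, key v]
    exact h _
  have hdistpq : η ≤ dist p q := by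
    have hc2 : Tendsto (fun k : ℕ => dist ((⇑g)^[φ (ψ k)] u) ((⇑g)^[φ (ψ k)] v)) atTop (𝓝 (dist p q)) :=
      htenp.dist htenq
    exact ge_of_tendsto hc2 (Eventually.of_forall (fun k => hφ2 (ψ k)))
  rw [hpq, dist_self] at hdistpq
  linarith

lemma symm_zpow (g : X ≃ₜ X) (i : ℤ) : g.symm.toEquiv ^ i = g.toEquiv ^ (-i) := by
  show g.toEquiv⁻¹ ^ i = _
  rw [inv_zpow, zpow_neg]

lemma expansive_symm (g : X ≃ₜ X) (h : Expansive g.toEquiv) : Expansive g.symm.toEquiv := by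
  obtain ⟨c, hc, hexp⟩ := h
  refine ⟨c, hc, fun x y hxy => hexp x y fun n => ?_⟩
  have := hxy (-n)
  rwa [symm_zpow, neg_neg] at this

lemma unif_cont [CompactSpace X] {G : X → X} (h : Continuous G) {ε : ℝ} (hε : 0 < ε) :
    ∃ δ > 0, ∀ a b : X, dist a b < δ → dist (G a) (G b) < ε := by
  have := CompactSpace.uniformContinuous_of_continuous h
  rw [Metric.uniformContinuous_iff] at this
  exact this ε hε

lemma shad_symm [CompactSpace X] (g : X ≃ₜ X) (h : ShadowingPropertyZ g.toEquiv) :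
    ShadowingPropertyZ g.symm.toEquiv := by
  intro ε hε
  obtain ⟨δ, hδ, hsh⟩ := h ε hε
  obtain ⟨δ', hδ', hmod⟩ := unif_cont g.continuous hδ
  refine ⟨δ', hδ', fun x hx => ?_⟩
  have hx' : ∀ i : ℤ, dist (g.toEquiv (x (-i))) (x (-i - 1)) < δ := by
    intro i
    have h1 := hx (-i - 1)
    have h2 : -i - 1 + 1 = -i := by ring
    rw [h2] at h1
    have h3 := hmod _ _ h1
    have h4 : g (g.symm.toEquiv (x (-i - 1))) = x (-i - 1) := g.apply_symm_apply _
    rw [h4] at h3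
    rw [dist_comm]
    exact h3
  obtain ⟨y, hy⟩ := hsh (fun i => x (-i)) (by
    intro i
    show dist (g.toEquiv (x (-i))) (x (-(i+1))) < δ
    rw [(by ring : -(i+1) = -i - 1)]
    exact hx' i)
  refine ⟨y, fun i => ?_⟩
  have := hy (-i)
  rw [symm_zpow]
  simpa using this

lemma C_implies_B [CompactSpace X] (f : X ≃ₜ X)
    (hC : TwoSidedLimitShadowingWithGap f.toEquiv) : LimitShadowing ⇑f := by
  intro x hx
  obtain ⟨N, hN⟩ := hC
  set xz : ℤ → X := fun i => if h : 0 ≤ i then x i.toNat else (f.toEquiv ^ i) (x 0) with hxz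
  have hpo : IsTwoSidedLimitPseudoOrbit f.toEquiv xz := by
    rw [IsTwoSidedLimitPseudoOrbit, tends_cofinite]
    constructor
    · -- eventually zero at bot
      rw [tends_int_atBot _ (fun n => dist_nonneg)]
      intro ε hε
      refine ⟨-2, fun n hn => ?_⟩
      have h1 : xz n = (f.toEquiv ^ n) (x 0) := by
        rw [hxz]; simp only [dif_neg (by omega : ¬ (0:ℤ) ≤ n)]
      have h2 : xz (n+1) = (f.toEquiv ^ (n+1)) (x 0) := by
        rw [hxz]; simp only [dif_neg (by omega : ¬ (0:ℤ) ≤ n+1)]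
      have h3 : f.toEquiv (xz n) = (f.toEquiv ^ (n+1)) (x 0) := by
        rw [h1, add_comm, zpow_add_apply]
        simp
      rw [h3, h2, dist_self]
      exact hε
    · rw [tends_int_atTop _ (fun n => dist_nonneg)]
      rw [tends_nat _ (fun n => dist_nonneg)] at hx
      intro ε hε
      obtain ⟨M, hM⟩ := hx ε hε
      refine ⟨M, fun n hn => ?_⟩
      have hn0 : 0 ≤ n := le_trans (by positivity) hn
      have h1 : xz n = x n.toNat := by rw [hxz]; simp only [dif_pos hn0]
      have h2 : xz (n+1) = x (n.toNat + 1) := by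
        rw [hxz]; simp only [dif_pos (by omega : (0:ℤ) ≤ n + 1)]
        congr 1
        omega
      rw [h1, h2]
      exact hM n.toNat (by omega)
  obtain ⟨K, -, y, -, hfwd⟩ := hN xz hpo
  refine ⟨(f.toEquiv ^ K) y, ?_⟩
  have hcomp : Tendsto (fun n : ℕ => dist ((f.toEquiv ^ (K + (n:ℤ))) y) (xz n)) atTop (𝓝 0) :=
    hfwd.comp tendsto_natCast_atTop_atTop
  refine hcomp.congr fun n => ?_
  have h1 : xz (n:ℤ) = x n := by
    rw [hxz]
    simp
  have h2 : (⇑f)^[n] ((f.toEquiv ^ K) y) = (f.toEquiv ^ (K + (n:ℤ))) y := by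
    rw [add_comm, zpow_add_apply, ← zpow_nat_coe f]
  rw [h1, h2]

lemma shadow_tail [CompactSpace X] (g : X ≃ₜ X) (hA : ShadowingPropertyZ g.toEquiv)
    (x : ℕ → X) (hx : ∀ ε > 0, ∃ N : ℕ, ∀ n ≥ N, dist (g (x n)) (x (n+1)) < ε)
    {ε' : ℝ} (hε' : 0 < ε') :
    ∃ (n : ℕ) (z : X), ∀ i : ℕ, dist ((⇑g)^[i] z) (x (n+i)) < ε' := by
  obtain ⟨δ, hδ, hsh⟩ := hA ε' hε'
  obtain ⟨N, hN⟩ := hx δ hδ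
  set w : ℤ → X := fun j => if 0 ≤ j then x (N + j.toNat) else (g.toEquiv ^ j) (x N) with hw
  have hpo : ∀ j : ℤ, dist (g.toEquiv (w j)) (w (j+1)) < δ := by
    intro j
    rcases le_or_gt 0 j with hj | hj
    · have h1 : w j = x (N + j.toNat) := by rw [hw]; simp only [if_pos hj]
      have h2 : w (j+1) = x (N + j.toNat + 1) := by
        have ht : N + (j+1).toNat = N + j.toNat + 1 := by omega
        rw [hw]; simp only [if_pos (by omega : (0:ℤ) ≤ j + 1)]
        rw [ht]
      rw [h1, h2]
      exact hN (N + j.toNat) (by omega)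
    · have h1 : w j = (g.toEquiv ^ j) (x N) := by rw [hw]; simp only [if_neg (by omega : ¬ (0:ℤ) ≤ j)]
      have h2 : w (j+1) = (g.toEquiv ^ (j+1)) (x N) := by
        rcases le_or_gt 0 (j+1) with hj1 | hj1
        · have hj0 : j + 1 = 0 := by omega
          rw [hw, hj0]
          simp
        · rw [hw]; simp only [if_neg (not_le.2 hj1)]
      have h3 : g.toEquiv (w j) = (g.toEquiv ^ (j+1)) (x N) := by
        rw [h1, add_comm, zpow_add_apply]
        simp
      rw [h3, h2, dist_self]
      exact hδ
  obtain ⟨z, hz⟩ := hsh w hpo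
  refine ⟨N, z, fun i => ?_⟩
  have := hz (i : ℤ)
  rw [zpow_nat_coe] at this
  have h1 : w (i:ℤ) = x (N + i) := by
    rw [hw]; simp only [if_pos (by positivity : (0:ℤ) ≤ (i:ℤ))]
    simp
  rwa [h1] at this

lemma A_implies_B [CompactSpace X] (g : X ≃ₜ X) (he : Expansive g.toEquiv)
    (hA : ShadowingPropertyZ g.toEquiv) : LimitShadowing ⇑g := by
  obtain ⟨c, hc, hexp⟩ := he
  intro x hx0
  rw [tends_nat _ (fun _ => dist_nonneg)] at hx0
  -- base shadow with ε' = c/2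
  obtain ⟨n₀, y, hy⟩ := shadow_tail g hA x hx0 (by positivity : (0:ℝ) < c/2)
  refine ⟨(g.toEquiv ^ (-(n₀:ℤ))) y, ?_⟩
  have hY : ∀ n : ℕ, n₀ ≤ n → (⇑g)^[n] ((g.toEquiv ^ (-(n₀:ℤ))) y) = (⇑g)^[n - n₀] y := by
    intro n hn
    have e : (n:ℤ) + -(n₀:ℤ) = ((n - n₀ : ℕ) : ℤ) := by omega
    rw [← zpow_nat_coe g n, ← zpow_add_apply, e, zpow_nat_coe]
  rw [tends_nat _ (fun _ => dist_nonneg)]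
  intro ε hε
  -- pick k with 1/(k+1) < ε/2 and ≤ c/2
  obtain ⟨k, hk⟩ := exists_nat_one_div_lt (by positivity : (0:ℝ) < ε/2)
  set εk : ℝ := min (c/2) (1/(k+1)) with hεk
  have hεkpos : 0 < εk := by
    apply lt_min (by positivity)
    positivity
  obtain ⟨nk, zk, hzk⟩ := shadow_tail g hA x hx0 hεkpos
  set m := max n₀ nk with hm
  set u : X := (⇑g)^[m - n₀] y with hu
  set v : X := (⇑g)^[m - nk] zk with hv
  have hclose : ∀ i : ℕ, dist ((⇑g)^[i] u) ((⇑g)^[i] v) ≤ c := by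
    intro i
    have h1 : (⇑g)^[i] u = (⇑g)^[(m - n₀) + i] y := by
      rw [hu, ← Function.iterate_add_apply, add_comm]
    have h2 : (⇑g)^[i] v = (⇑g)^[(m - nk) + i] zk := by
      rw [hv, ← Function.iterate_add_apply, add_comm]
    have h3 := hy ((m - n₀) + i)
    have h4 := hzk ((m - nk) + i)
    have e1 : n₀ + ((m - n₀) + i) = m + i := by omega
    have e2 : nk + ((m - nk) + i) = m + i := by omega
    rw [e1] at h3; rw [e2] at h4
    rw [h1, h2]
    calc dist ((⇑g)^[m - n₀ + i] y) ((⇑g)^[m - nk + i] zk)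
        ≤ dist ((⇑g)^[m - n₀ + i] y) (x (m+i)) + dist ((⇑g)^[m - nk + i] zk) (x (m+i)) :=
          dist_triangle_right _ _ _
      _ ≤ c/2 + εk := le_of_lt (add_lt_add h3 h4)
      _ ≤ c/2 + c/2 := by
          have : εk ≤ c/2 := min_le_left _ _
          linarith
      _ = c := by ring
  obtain ⟨M, hM⟩ := asymp g hexp u v hclose (ε/2) (by positivity)
  refine ⟨m + M + n₀, fun n hn => ?_⟩
  have hn₀ : n₀ ≤ n := by omega
  rw [hY n hn₀]
  set i := n - m with hi
  have hiM : M ≤ i := by omega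
  have h5 : (⇑g)^[n - n₀] y = (⇑g)^[i] u := by
    rw [hu, ← Function.iterate_add_apply]
    congr 1
    omega
  have h6 : (⇑g)^[i] v = (⇑g)^[(m - nk) + i] zk := by
    rw [hv, ← Function.iterate_add_apply, add_comm]
  have h7 := hzk ((m - nk) + i)
  have e2 : nk + ((m - nk) + i) = n := by omega
  rw [e2] at h7
  have h8 := hM i hiM
  have hεk2 : εk ≤ 1/(k+1) := min_le_right _ _
  have hxn : x n = x (m + i) := by congr 1; omega
  calc dist ((⇑g)^[n-n₀] y) (x n)
      ≤ dist ((⇑g)^[i] u) ((⇑g)^[i] v) + dist ((⇑g)^[i] v) (x n) := by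
        rw [h5]; exact dist_triangle _ _ _
    _ < ε/2 + εk := by
        apply add_lt_add h8
        rw [h6]
        exact h7
    _ < ε/2 + ε/2 := by
        have : (1:ℝ)/(k+1) < ε/2 := hk
        have := lt_of_le_of_lt hεk2 this
        linarith
    _ = ε := by ring

def ChainFrom (g : X ≃ₜ X) (δ : ℝ) (a b : X) (L : ℕ) : Prop :=
  ∃ ch : ℕ → X, ch 0 = a ∧ ch L = b ∧ ∀ i < L, dist (g (ch i)) (ch (i+1)) < δ

lemma chain_exists (f : X ≃ₜ X) (ht : TopologicallyTransitive ⇑f) {δ : ℝ} (hδ : 0 < δ)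
    (a b : X) : ∃ L, 1 ≤ L ∧ ChainFrom f δ a b L := by
  obtain ⟨N, hN, v, hv1, hv2⟩ := ht (Metric.ball (f a) δ) (Metric.ball b δ)
    Metric.isOpen_ball Metric.isOpen_ball ⟨f a, Metric.mem_ball_self hδ⟩ ⟨b, Metric.mem_ball_self hδ⟩
  obtain ⟨u, hu, rfl⟩ := hv1
  refine ⟨N + 1, by omega, fun i => if i = 0 then a else if i ≤ N then (⇑f)^[i-1] u else b, rfl, ?_, ?_⟩
  · simp only [if_neg (by omega : ¬ N + 1 = 0), if_neg (by omega : ¬ N + 1 ≤ N)]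
  · intro i hi
    rcases Nat.eq_zero_or_pos i with rfl | hipos
    · simp only [if_pos rfl, if_neg (by omega : ¬ (1:ℕ) = 0), if_pos (by omega : 1 ≤ N)]
      simp only [Nat.sub_self, Function.iterate_zero_apply]
      rw [dist_comm]
      exact Metric.mem_ball.1 hu
    · rcases Nat.lt_or_ge i N with hiN | hiN
      · simp only [if_neg (by omega : ¬ i = 0), if_pos (by omega : i ≤ N),
          if_neg (by omega : ¬ i + 1 = 0), if_pos (by omega : i + 1 ≤ N)]
        have : (⇑f)^[i+1-1] u = f ((⇑f)^[i-1] u) := by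
          have h2 : i + 1 - 1 = (i-1) + 1 := by omega
          rw [h2, Function.iterate_succ_apply']
        rw [this, dist_self]
        exact hδ
      · have hiN' : i = N := by omega
        subst hiN'
        simp only [if_neg (by omega : ¬ i = 0), if_pos (le_refl i),
          if_neg (by omega : ¬ i + 1 = 0), if_neg (by omega : ¬ i + 1 ≤ i)]
        have : f ((⇑f)^[i-1] u) = (⇑f)^[i] u := by
          have h2 : i = (i-1) + 1 := by omega
          rw [h2, Function.iterate_succ_apply']
          simp only [← h2]
        rw [this]
        exact Metric.mem_ball.1 hv2

lemma chain_append (g : X ≃ₜ X) {δ : ℝ} {a b c : X} {L L' : ℕ}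
    (h1 : ChainFrom g δ a b L) (h2 : ChainFrom g δ b c L') :
    ChainFrom g δ a c (L + L') := by
  obtain ⟨c1, hc10, hc1L, hc1s⟩ := h1
  obtain ⟨c2, hc20, hc2L, hc2s⟩ := h2
  refine ⟨fun i => if i ≤ L then c1 i else c2 (i - L), by simp [hc10], ?_, ?_⟩
  · rcases Nat.eq_zero_or_pos L' with rfl | hL'
    · simp only [if_pos (by omega : L + 0 ≤ L)]
      rw [(by omega : L + 0 = L), hc1L, ← hc20]
      rw [← hc2L]
    · simp only [if_neg (by omega : ¬ L + L' ≤ L)]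
      rw [(by omega : L + L' - L = L'), hc2L]
  · intro i hi
    rcases Nat.lt_or_ge i L with hiL | hiL
    · dsimp only
      rw [if_pos (by omega : i ≤ L), if_pos (by omega : i + 1 ≤ L)]
      exact hc1s i hiL
    · have key : ∀ j, L ≤ j → (if j ≤ L then c1 j else c2 (j - L)) = c2 (j - L) := by
        intro j hj2
        by_cases hjL : j ≤ L
        · have hj : j = L := le_antisymm hjL hj2
          subst hj
          simp only [if_pos (le_refl j), Nat.sub_self, hc20, hc1L]
        · simp only [if_neg hjL]
      dsimp only
      rw [key i hiL, key (i+1) (by omega)]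
      have h3 : i + 1 - L = (i - L) + 1 := by omega
      rw [h3]
      exact hc2s (i - L) (by omega)

lemma chain_repeat (g : X ≃ₜ X) {δ : ℝ} {b : X} {L : ℕ} (h : ChainFrom g δ b b L) :
    ∀ k : ℕ, 1 ≤ k → ChainFrom g δ b b (k * L) := by
  intro k
  induction k with
  | zero => omega
  | succ n ih =>
    intro _
    rcases Nat.eq_zero_or_pos n with rfl | hn
    · simpa using h
    · have := chain_append g (ih hn) h
      rwa [(by ring : n * L + L = (n+1) * L)] at this

lemma fin_shadow_of_B [CompactSpace X] (f : X ≃ₜ X) (ht : TopologicallyTransitive ⇑f)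
    (hB : LimitShadowing ⇑f) :
    ∀ ε > 0, ∃ δ > 0, ∀ (b : ℕ → X) (L : ℕ),
      (∀ i < L, dist (f (b i)) (b (i+1)) < δ) → ∃ z : X, ∀ i ≤ L, dist ((⇑f)^[i] z) (b i) < ε := by
  by_contra hcon
  push_neg at hcon
  obtain ⟨ε, hε, hbad⟩ := hcon
  have hk : ∀ k : ℕ, ∃ (b : ℕ → X) (L : ℕ), (∀ i < L, dist (f (b i)) (b (i+1)) < 1/(k+1)) ∧
      ∀ z : X, ∃ i, i ≤ L ∧ ε ≤ dist ((⇑f)^[i] z) (b i) := by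
    intro k
    obtain ⟨b, L, h1, h2⟩ := hbad (1/(k+1)) (by positivity)
    exact ⟨b, L, h1, fun z => by
      obtain ⟨i, hi1, hi2⟩ := h2 z
      exact ⟨i, hi1, hi2⟩⟩
  choose bseq Lseq hfine hbadz using hk
  have hch : ∀ k : ℕ, ∃ C, 1 ≤ C ∧ ChainFrom f (1/(k+1)) (bseq k (Lseq k)) (bseq (k+1) 0) C :=
    fun k => chain_exists f ht (by positivity) _ _
  choose Cseq hC1 hCch using hch
  choose cfun hc0 hcL hcs using hCch
  -- offsets
  set o : ℕ → ℕ := fun k => k.rec 0 (fun m acc => acc + Lseq m + Cseq m) with ho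
  have ho0 : o 0 = 0 := rfl
  have hoS : ∀ k, o (k+1) = o k + Lseq k + Cseq k := fun k => rfl
  have homono : ∀ k, o k + Lseq k < o (k+1) := by
    intro k
    rw [hoS]
    have := hC1 k
    omega
  have hostrict : StrictMono o := strictMono_nat_of_lt_succ (fun k => by
    have := homono k
    omega)
  have hok : ∀ k, k ≤ o k := by
    intro k
    induction k with
    | zero => omega
    | succ n ih => have := homono n; omega
  -- the concatenated sequence
  set x : ℕ → X := fun n =>
    (fun k => if n ≤ o k + Lseq k then bseq k (n - o k) else cfun k (n - o k - Lseq k))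
      (Nat.findGreatest (fun k => o k ≤ n) n) with hx
  have hfg : ∀ n k, o k ≤ n → n < o (k+1) → Nat.findGreatest (fun k => o k ≤ n) n = k := by
    intro n k h1 h2
    rw [Nat.findGreatest_eq_iff]
    refine ⟨le_trans (hok k) h1, fun _ => h1, fun m hm hmn hPm => ?_⟩
    have : o (k+1) ≤ o m := hostrict.monotone hm
    omega
  have hx_b : ∀ k i, i ≤ Lseq k → x (o k + i) = bseq k i := by
    intro k i hi
    have h1 : o k ≤ o k + i := by omega
    have h2 : o k + i < o (k+1) := by have := homono k; omega
    rw [hx]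
    simp only [hfg (o k + i) k h1 h2]
    rw [if_pos (by omega : o k + i ≤ o k + Lseq k)]
    congr 1
    omega
  have hx_c : ∀ k j, 1 ≤ j → j < Cseq k → x (o k + Lseq k + j) = cfun k j := by
    intro k j hj1 hj2
    have h1 : o k ≤ o k + Lseq k + j := by omega
    have h2 : o k + Lseq k + j < o (k+1) := by rw [hoS]; omega
    rw [hx]
    simp only [hfg _ k h1 h2]
    rw [if_neg (by omega : ¬ o k + Lseq k + j ≤ o k + Lseq k)]
    congr 1
    omega
  -- values as chain points, including both ends
  have hx_c' : ∀ k j, j ≤ Cseq k → x (o k + Lseq k + j) = cfun k j := by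
    intro k j hj
    rcases Nat.eq_zero_or_pos j with rfl | hj1
    · rw [(by omega : o k + Lseq k + 0 = o k + Lseq k)]
      have := hx_b k (Lseq k) (le_refl _)
      rw [this, hc0]
    · rcases Nat.lt_or_ge j (Cseq k) with hj2 | hj2
      · exact hx_c k j hj1 hj2
      · have hj3 : j = Cseq k := by omega
        subst hj3
        have h4 : o k + Lseq k + Cseq k = o (k+1) + 0 := by rw [hoS]; omega
        rw [h4, hx_b (k+1) 0 (by omega), ← hcL]
  have hstep : ∀ k n, o k ≤ n → n < o (k+1) → dist (f (x n)) (x (n+1)) < 1/(k+1) := by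
    intro k n h1 h2
    rcases Nat.lt_or_ge n (o k + Lseq k) with h3 | h3
    · -- inside b-block
      set i := n - o k with hi
      have e1 : n = o k + i := by omega
      have e2 : n + 1 = o k + (i+1) := by omega
      rw [e1, show o k + i + 1 = o k + (i+1) from by omega,
        hx_b k i (by omega), hx_b k (i+1) (by omega)]
      exact hfine k i (by omega)
    · -- inside chain block
      set j := n - o k - Lseq k with hj
      have e1 : n = o k + Lseq k + j := by omega
      have e2 : n + 1 = o k + Lseq k + (j+1) := by omega
      have hjC : j < Cseq k := by rw [hoS] at h2; omega
      rw [e1, show o k + Lseq k + j + 1 = o k + Lseq k + (j+1) from by omega,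
        hx_c' k j (by omega), hx_c' k (j+1) (by omega)]
      exact hcs k j hjC
  have hglobal : ∀ K n, o K ≤ n → dist (f (x n)) (x (n+1)) < 1/(K+1) := by
    intro K n h1
    have hKn : K ≤ n := le_trans (hok K) h1
    set k := Nat.findGreatest (fun k => o k ≤ n) n with hkk
    have hPk : o k ≤ n := Nat.findGreatest_spec (P := fun k => o k ≤ n) hKn h1
    have hKk : K ≤ k := Nat.le_findGreatest hKn h1
    have hnk1 : n < o (k+1) := by
      by_contra hcon2
      push_neg at hcon2
      exact Nat.findGreatest_is_greatest (P := fun k => o k ≤ n) (lt_add_one k)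
        (le_trans (hok (k+1)) hcon2) hcon2
    calc dist (f (x n)) (x (n+1)) < 1/((k:ℝ)+1) := hstep k n hPk hnk1
      _ ≤ 1/((K:ℝ)+1) := by
          apply one_div_le_one_div_of_le (by positivity)
          have : (K:ℝ) ≤ k := by exact_mod_cast hKk
          linarith
  have hlim : Tendsto (fun n : ℕ => dist (f (x n)) (x (n+1))) atTop (𝓝 0) := by
    rw [tends_nat _ (fun _ => dist_nonneg)]
    intro ε' hε'
    obtain ⟨K, hK⟩ := exists_nat_one_div_lt hε'
    refine ⟨o K, fun n hn => ?_⟩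
    calc dist (f (x n)) (x (n+1)) < 1/(K+1) := hglobal K n hn
      _ < ε' := hK
  obtain ⟨y, hy⟩ := hB x hlim
  rw [tends_nat _ (fun _ => dist_nonneg)] at hy
  obtain ⟨M, hM⟩ := hy ε hε
  obtain ⟨i, hi1, hi2⟩ := hbadz M ((⇑f)^[o M] y)
  have h1 : (⇑f)^[i] ((⇑f)^[o M] y) = (⇑f)^[o M + i] y := by
    rw [← Function.iterate_add_apply, add_comm]
  have h2 : x (o M + i) = bseq M i := hx_b M i hi1
  have h3 := hM (o M + i) (by have := hok M; omega)
  rw [h1, ← h2] at hi2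
  linarith

lemma A_of_fin [CompactSpace X] (f : X ≃ₜ X)
    (hfin : ∀ ε > 0, ∃ δ > 0, ∀ (b : ℕ → X) (L : ℕ),
      (∀ i < L, dist (f (b i)) (b (i+1)) < δ) → ∃ z : X, ∀ i ≤ L, dist ((⇑f)^[i] z) (b i) < ε) :
    ShadowingPropertyZ f.toEquiv := by
  intro ε hε
  obtain ⟨δ, hδ, hsh⟩ := hfin (ε/2) (by positivity)
  refine ⟨δ, hδ, fun x hx => ?_⟩
  have hshn : ∀ n : ℕ, ∃ z : X, ∀ i : ℤ, |i| ≤ (n:ℤ) → dist ((f.toEquiv ^ i) z) (x i) < ε/2 := by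
    intro n
    obtain ⟨w, hw⟩ := hsh (fun j : ℕ => x ((j:ℤ) - n)) (2*n) (by
      intro j hj
      have := hx ((j:ℤ) - n)
      have e : ((j:ℤ) - n) + 1 = ((j+1:ℕ):ℤ) - n := by push_cast; ring
      rw [e] at this
      exact this)
    refine ⟨(f.toEquiv ^ (n:ℤ)) w, fun i hi => ?_⟩
    rw [abs_le] at hi
    have hj0 : (0:ℤ) ≤ i + n := by omega
    set j := (i + n).toNat with hjdef
    have hj1 : j ≤ 2*n := by omega
    have hkey : (f.toEquiv ^ i) ((f.toEquiv ^ (n:ℤ)) w) = (⇑f)^[j] w := by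
      rw [← zpow_add_apply, show i + (n:ℤ) = ((j:ℕ):ℤ) from by omega, zpow_nat_coe]
    have hx2 : x ((j:ℤ) - n) = x i := by congr 1; omega
    have := hw j hj1
    rw [hx2] at this
    rwa [hkey]
  choose zs hzs using hshn
  obtain ⟨z, -, φ, hφ, hz⟩ := isCompact_univ.tendsto_subseq (fun n => Set.mem_univ (zs n))
  refine ⟨z, fun i => ?_⟩
  have hle : dist ((f.toEquiv ^ i) z) (x i) ≤ ε/2 := by
    have hcont : Tendsto (fun n : ℕ => (f.toEquiv ^ i) (zs (φ n))) atTop (𝓝 ((f.toEquiv ^ i) z)) :=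
      ((zpow_cont f i).tendsto z).comp hz
    have hten : Tendsto (fun n : ℕ => dist ((f.toEquiv ^ i) (zs (φ n))) (x i)) atTop
        (𝓝 (dist ((f.toEquiv ^ i) z) (x i))) := hcont.dist tendsto_const_nhds
    refine le_of_tendsto hten ?_
    filter_upwards [eventually_ge_atTop i.natAbs] with n hn
    refine le_of_lt (hzs (φ n) i ?_)
    have h1 : n ≤ φ n := hφ.le_apply
    have h2 : i.natAbs ≤ φ n := le_trans hn h1
    rw [abs_le]
    omega
  linarith

lemma B_implies_A [CompactSpace X] (f : X ≃ₜ X) (ht : TopologicallyTransitive ⇑f)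
    (hB : LimitShadowing ⇑f) : ShadowingPropertyZ f.toEquiv :=
  A_of_fin f (fin_shadow_of_B f ht hB)

lemma net_exists [CompactSpace X] {η : ℝ} (hη : 0 < η) :
    ∃ s : Finset X, ∀ x : X, ∃ p ∈ s, dist x p < η := by
  have h : TotallyBounded (Set.univ : Set X) := isCompact_univ.totallyBounded
  rw [Metric.totallyBounded_iff] at h
  obtain ⟨t, ht, hcov⟩ := h η hη
  obtain ⟨s, hs⟩ := ht.exists_finset_coe
  refine ⟨s, fun x => ?_⟩
  have := hcov (Set.mem_univ x)
  simp only [Set.mem_iUnion] at this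
  obtain ⟨p, hp, hxp⟩ := this
  refine ⟨p, ?_, by simpa [Metric.mem_ball] using hxp⟩
  rw [← hs] at hp
  exact_mod_cast hp

lemma chain_wiggle (f : X ≃ₜ X) {δ : ℝ} {p q a b : X} {L : ℕ}
    (hch : ChainFrom f (δ/2) p q L) (hL : 2 ≤ L)
    (ha : dist (f a) (f p) < δ/2) (hb : dist b q < δ/2) : ChainFrom f δ a b L := by
  obtain ⟨ch, hc0, hcL, hcs⟩ := hch
  refine ⟨fun i => if i = 0 then a else if i = L then b else ch i,
    by simp, by dsimp only; rw [if_neg (by omega : ¬ L = 0), if_pos rfl], ?_⟩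
  intro i hi
  dsimp only
  rcases Nat.eq_zero_or_pos i with rfl | hipos
  · rw [if_pos rfl, if_neg (by omega : ¬ (1:ℕ) = 0), if_neg (by omega : ¬ (1:ℕ) = L)]
    calc dist (f a) (ch 1) ≤ dist (f a) (f p) + dist (f p) (ch 1) := dist_triangle _ _ _
      _ < δ/2 + δ/2 := by
          apply add_lt_add ha
          have := hcs 0 (by omega)
          rwa [hc0] at this
      _ = δ := by ring
  · rw [if_neg (by omega : ¬ i = 0), if_neg (by omega : ¬ i = L)]
    rcases Nat.lt_or_ge (i+1) L with h2 | h2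
    · rw [if_neg (by omega : ¬ i + 1 = 0), if_neg (by omega : ¬ i + 1 = L)]
      calc dist (f (ch i)) (ch (i+1)) < δ/2 := hcs i hi
        _ < δ := by linarith [half_lt_self (lt_of_le_of_lt dist_nonneg (hcs i hi))]
    · have hiL : i + 1 = L := by omega
      rw [if_neg (by omega : ¬ i + 1 = 0), if_pos hiL]
      calc dist (f (ch i)) b ≤ dist (f (ch i)) (ch (i+1)) + dist (ch (i+1)) b := dist_triangle _ _ _
        _ < δ/2 + δ/2 := by
            apply add_lt_add (hcs i hi)
            rw [hiL, hcL, dist_comm]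
            exact hb
        _ = δ := by ring

lemma exists_window {s0 ℓ0 : ℕ} (hs : 1 ≤ s0) :
    ∀ W, ℓ0 + s0 ≤ W → ∃ k, 1 ≤ k ∧ W ≤ ℓ0 + s0 * k ∧ ℓ0 + s0 * k < W + s0 := by
  intro W
  induction W with
  | zero => omega
  | succ n ih =>
    intro hW
    rcases Nat.lt_or_ge (ℓ0 + s0) (n+1) with h | h
    · obtain ⟨k, hk1, hk2, hk3⟩ := ih (by omega)
      rcases Nat.lt_or_ge (ℓ0 + s0 * k) (n+1) with h2 | h2
      · refine ⟨k+1, by omega, ?_, ?_⟩ <;> rw [Nat.mul_succ] <;> omega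
      · exact ⟨k, hk1, h2, by omega⟩
    · refine ⟨1, le_refl 1, ?_, ?_⟩ <;> rw [Nat.mul_one] <;> omega

lemma chain_window [CompactSpace X] (f : X ≃ₜ X) (ht : TopologicallyTransitive ⇑f)
    {δ : ℝ} (hδ : 0 < δ) :
    ∃ T N : ℕ, 1 ≤ N ∧ ∀ a b : X, ∀ W, T ≤ W → ∃ L, W ≤ L ∧ L ≤ W + N ∧ ChainFrom f δ a b L := by
  have hδ2 : (0:ℝ) < δ/2 := by linarith
  obtain ⟨η, hη, hmod⟩ := unif_cont f.continuous hδ2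
  obtain ⟨D, hD⟩ := net_exists (X := X) (lt_min hη hδ2)
  have hpq : ∀ p q : X, ∃ L, 1 ≤ L ∧ ChainFrom f (δ/2) p q L := fun p q =>
    chain_exists f ht hδ2 p q
  choose ℓ hℓ1 hℓch using hpq
  set A := D.sup (fun p => D.sup (fun q => ℓ p q)) with hA
  set S := D.sup (fun q => ℓ q q) with hS
  refine ⟨A + S + 1, S + 1, by omega, fun a b W hW => ?_⟩
  obtain ⟨p, hpD, hap⟩ := hD a
  obtain ⟨q, hqD, hbq⟩ := hD b
  have hℓ0A : ℓ p q ≤ A := by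
    calc ℓ p q ≤ D.sup (fun q => ℓ p q) := Finset.le_sup (f := fun q => ℓ p q) hqD
      _ ≤ A := Finset.le_sup (f := fun p => D.sup (fun q => ℓ p q)) hpD
  have hs0S : ℓ q q ≤ S := Finset.le_sup (f := fun q => ℓ q q) hqD
  set ℓ0 := ℓ p q with hℓ0
  set s0 := ℓ q q with hs0
  have hs01 : 1 ≤ s0 := hℓ1 q q
  have hℓ01 : 1 ≤ ℓ0 := hℓ1 p q
  obtain ⟨k, hk1, hks1, hks2⟩ := exists_window (s0 := s0) (ℓ0 := ℓ0) hs01 W (by omega)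
  have hrep : ChainFrom f (δ/2) q q (k * s0) := chain_repeat f (hℓch q q) k hk1
  have hfull : ChainFrom f (δ/2) p q (ℓ0 + k * s0) := chain_append f (hℓch p q) hrep
  have hmm : s0 * k = k * s0 := Nat.mul_comm _ _
  have hL2 : 2 ≤ ℓ0 + k * s0 := by
    have : s0 ≤ s0 * k := Nat.le_mul_of_pos_right s0 hk1
    omega
  have ha' : dist (f a) (f p) < δ/2 := hmod a p (lt_of_lt_of_le hap (min_le_left _ _))
  have hb' : dist b q < δ/2 := lt_of_lt_of_le hbq (min_le_right _ _)
  refine ⟨ℓ0 + k * s0, by omega, by omega, chain_wiggle f hfull hL2 ha' hb'⟩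

lemma A_implies_C [CompactSpace X] (f : X ≃ₜ X) (ht : TopologicallyTransitive ⇑f)
    {c : ℝ} (hc : 0 < c)
    (hexp : ∀ x y : X, (∀ n : ℤ, dist ((f.toEquiv ^ n) x) ((f.toEquiv ^ n) y) ≤ c) → x = y)
    (hA : ShadowingPropertyZ f.toEquiv) :
    TwoSidedLimitShadowingWithGap f.toEquiv := by
  have hε₀ : (0:ℝ) < c/3 := by linarith
  obtain ⟨δ, hδ, hsh⟩ := hA (c/3) hε₀
  obtain ⟨T, N, hN1, hwin⟩ := chain_window f ht hδ
  refine ⟨N, fun x hx => ?_⟩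
  have hB : LimitShadowing ⇑f := A_implies_B f ⟨c, hc, hexp⟩ hA
  have hBs : LimitShadowing ⇑f.symm :=
    A_implies_B f.symm (expansive_symm f ⟨c, hc, hexp⟩) (shad_symm f hA)
  rw [IsTwoSidedLimitPseudoOrbit, tends_cofinite _] at hx
  obtain ⟨hxbot, hxtop⟩ := hx
  rw [tends_int_atBot _ (fun _ => dist_nonneg)] at hxbot
  rw [tends_int_atTop _ (fun _ => dist_nonneg)] at hxtop
  -- forward limit shadowing point
  have hxp : Tendsto (fun n : ℕ => dist (f (x n)) (x ((n:ℤ)+1))) atTop (𝓝 0) := by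
    rw [tends_nat _ (fun _ => dist_nonneg)]
    intro ε hε
    obtain ⟨Nz, hNz⟩ := hxtop ε hε
    exact ⟨Nz.toNat, fun n hn => hNz n (by omega)⟩
  obtain ⟨yp, hyp⟩ := hB (fun n : ℕ => x n) (by
    apply hxp.congr
    intro n
    norm_cast)
  rw [tends_nat _ (fun _ => dist_nonneg)] at hyp
  -- backward limit shadowing point (for f.symm)
  obtain ⟨ym, hym⟩ := hBs (fun n : ℕ => x (-(n:ℤ))) (by
    rw [tends_nat _ (fun _ => dist_nonneg)]
    intro ε hε
    obtain ⟨δ2, hδ2, hmod2⟩ := unif_cont f.symm.continuous hε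
    obtain ⟨Nz, hNz⟩ := hxbot δ2 hδ2
    refine ⟨(-(Nz-1)).toNat, fun n hn => ?_⟩
    have h1 := hNz (-((n:ℤ)+1)) (by omega)
    rw [show (-((n:ℤ)+1) + 1) = -(n:ℤ) from by ring] at h1
    have h2 := hmod2 _ _ h1
    rw [show f.toEquiv (x (-((n:ℤ)+1))) = f (x (-((n:ℤ)+1))) from rfl,
      Homeomorph.symm_apply_apply] at h2
    show dist (f.symm (x (-(n:ℤ)))) (x (-((n+1:ℕ):ℤ))) < ε
    rw [dist_comm, show (-((n+1:ℕ):ℤ)) = -((n:ℤ)+1) from by push_cast; ring]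
    exact h2)
  rw [tends_nat _ (fun _ => dist_nonneg)] at hym
  -- choose the cut point M
  obtain ⟨M1, hM1⟩ := hyp (c/3) hε₀
  obtain ⟨M2, hM2⟩ := hym (c/3) hε₀
  obtain ⟨Nb, hNb⟩ := hxbot δ hδ
  obtain ⟨Nt, hNt⟩ := hxtop δ hδ
  set M : ℕ := M1 + M2 + T + 1 + (-Nb).toNat + Nt.toNat with hM
  have hMT : T ≤ 2 * M := by omega
  have hMNb : -(M:ℤ) ≤ Nb := by omega
  have hMNt : Nt ≤ (M:ℤ) := by omega
  have hM1M : M1 ≤ M := by omega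
  have hM2M : M2 ≤ M := by omega
  have hMpos : 1 ≤ M := by omega
  -- the connecting chain
  obtain ⟨L, hWL, hLW, hchain⟩ := hwin (x (-(M:ℤ))) (x (M:ℤ)) (2*M) hMT
  obtain ⟨ch, hch0, hchL, hchs⟩ := hchain
  set K : ℤ := (L:ℤ) - 2*M with hK
  -- the spliced pseudo-orbit
  set w : ℤ → X := fun j =>
    if j ≤ -(M:ℤ) then x j else if j ≤ -(M:ℤ) + L then ch (j + M).toNat
    else x (j - L + 2*M) with hw
  have hw_neg : ∀ j : ℤ, j ≤ -(M:ℤ) → w j = x j := by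
    intro j hj
    rw [hw]; dsimp only; rw [if_pos hj]
  have hw_ch : ∀ j : ℤ, -(M:ℤ) ≤ j → j ≤ -(M:ℤ) + L → w j = ch (j + M).toNat := by
    intro j h1 h2
    rw [hw]; dsimp only
    by_cases h3 : j ≤ -(M:ℤ)
    · have hje : j = -(M:ℤ) := le_antisymm h3 h1
      rw [if_pos h3, hje, show ((-(M:ℤ)) + M).toNat = 0 from by omega, hch0]
    · rw [if_neg h3, if_pos h2]
  have hw_pos : ∀ j : ℤ, -(M:ℤ) + L ≤ j → w j = x (j - L + 2*M) := by
    intro j h1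
    have hL2 : 2 ≤ L := by omega
    rw [hw]; dsimp only
    by_cases h3 : j ≤ -(M:ℤ) + L
    · have hje : j = -(M:ℤ) + L := le_antisymm h3 h1
      rw [if_neg (by omega : ¬ j ≤ -(M:ℤ)), if_pos h3, hje,
        show ((-(M:ℤ) + L) + M).toNat = L from by omega, hchL]
      congr 1
      ring
    · rw [if_neg (by omega : ¬ j ≤ -(M:ℤ)), if_neg h3]
  -- fineness of the spliced orbit
  have hwf : ∀ j : ℤ, dist (f (w j)) (w (j+1)) < δ := by
    intro j
    by_cases h1 : j + 1 ≤ -(M:ℤ)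
    · rw [hw_neg j (by omega), hw_neg (j+1) h1]
      exact hNb j (by omega)
    · by_cases h2 : j < -(M:ℤ) + L
      · rw [hw_ch j (by omega) (by omega), hw_ch (j+1) (by omega) (by omega),
          show ((j+1) + M).toNat = (j + M).toNat + 1 from by omega]
        exact hchs (j + M).toNat (by omega)
      · rw [hw_pos j (by omega), hw_pos (j+1) (by omega),
          show (j+1) - L + 2*M = (j - L + 2*M) + 1 from by ring]
        exact hNt (j - L + 2*M) (by omega)
  obtain ⟨z, hz⟩ := hsh w hwf
  -- iterate identities
  have e1 : ∀ (n : ℕ) (u : X),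
      (⇑f.symm)^[n] ((f.toEquiv ^ (-(M:ℤ))) u) = (f.toEquiv ^ (-((M+n:ℕ):ℤ))) u := by
    intro n u
    rw [← zpow_neg_coe, ← zpow_add_apply]
    congr 1
    push_cast
    ring
  have e2 : ∀ (n : ℕ) (u : X),
      (⇑f)^[n] ((f.toEquiv ^ (K + M)) u) = (f.toEquiv ^ (K + ((M+n:ℕ):ℤ))) u := by
    intro n u
    rw [← zpow_nat_coe, ← zpow_add_apply]
    congr 1
    push_cast
    ring
  have hym' : ∀ n : ℕ, M2 ≤ n → dist ((f.toEquiv ^ (-(n:ℤ))) ym) (x (-(n:ℤ))) < c/3 := by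
    intro n hn
    have := hM2 n hn
    rwa [← zpow_neg_coe] at this
  refine ⟨K, ?_, z, ?_, ?_⟩
  · rw [abs_le]
    omega
  · -- backward convergence
    have hcmp : ∀ n : ℕ, dist ((⇑f.symm)^[n] ((f.toEquiv ^ (-(M:ℤ))) z))
        ((⇑f.symm)^[n] ((f.toEquiv ^ (-(M:ℤ))) ym)) ≤ c := by
      intro n
      rw [e1, e1]
      have hiM : -((M+n:ℕ):ℤ) ≤ -(M:ℤ) := by omega
      have h1 : dist ((f.toEquiv ^ (-((M+n:ℕ):ℤ))) z) (x (-((M+n:ℕ):ℤ))) < c/3 := by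
        have := hz (-((M+n:ℕ):ℤ))
        rwa [hw_neg _ hiM] at this
      have h2 : dist ((f.toEquiv ^ (-((M+n:ℕ):ℤ))) ym) (x (-((M+n:ℕ):ℤ))) < c/3 := by
        have := hym' (M+n) (by omega)
        rwa [show (((M+n:ℕ)):ℤ) = ((M:ℤ)+n) from by push_cast; ring] at this ⊢
      calc dist ((f.toEquiv ^ (-((M+n:ℕ):ℤ))) z) ((f.toEquiv ^ (-((M+n:ℕ):ℤ))) ym)
          ≤ dist ((f.toEquiv ^ (-((M+n:ℕ):ℤ))) z) (x (-((M+n:ℕ):ℤ)))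
            + dist ((f.toEquiv ^ (-((M+n:ℕ):ℤ))) ym) (x (-((M+n:ℕ):ℤ))) := dist_triangle_right _ _ _
        _ ≤ c/3 + c/3 := by linarith
        _ ≤ c := by linarith
    have hexps : ∀ u v : X,
        (∀ n : ℤ, dist ((f.symm.toEquiv ^ n) u) ((f.symm.toEquiv ^ n) v) ≤ c) → u = v := by
      intro u v h
      apply hexp
      intro n
      have := h (-n)
      rwa [symm_zpow, neg_neg] at this
    have hasym := asymp f.symm hexps _ _ hcmp
    rw [tends_int_atBot _ (fun _ => dist_nonneg)]
    intro ε hε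
    obtain ⟨Q, hQ⟩ := hasym (ε/2) (by positivity)
    obtain ⟨M3, hM3⟩ := hym (ε/2) (by positivity)
    refine ⟨-((M + Q + M3 : ℕ):ℤ), fun i hi => ?_⟩
    set n : ℕ := (-i - M).toNat with hn
    have hn1 : i = -((M+n:ℕ):ℤ) := by omega
    have hnQ : Q ≤ n := by omega
    have hfirst : dist ((f.toEquiv ^ i) z) ((f.toEquiv ^ i) ym) < ε/2 := by
      have := hQ n hnQ
      rwa [e1, e1, ← hn1] at this
    have hsecond : dist ((f.toEquiv ^ i) ym) (x i) < ε/2 := by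
      have := hM3 (M+n) (by omega)
      rw [← zpow_neg_coe] at this
      rwa [show -(((M+n:ℕ)):ℤ) = i from hn1.symm] at this
    calc dist ((f.toEquiv ^ i) z) (x i)
        ≤ dist ((f.toEquiv ^ i) z) ((f.toEquiv ^ i) ym) + dist ((f.toEquiv ^ i) ym) (x i) :=
          dist_triangle _ _ _
      _ < ε/2 + ε/2 := add_lt_add hfirst hsecond
      _ = ε := by ring
  · -- forward convergence
    have hfor : ∀ i : ℤ, (M:ℤ) ≤ i → dist ((f.toEquiv ^ (K + i)) z) (x i) < c/3 := by
      intro i hi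
      have hj : -(M:ℤ) + L ≤ K + i := by omega
      have := hz (K + i)
      rwa [hw_pos _ hj, show K + i - L + 2*M = i from by rw [hK]; ring] at this
    have hcmp2 : ∀ n : ℕ, dist ((⇑f)^[n] ((f.toEquiv ^ (K + M)) z))
        ((⇑f)^[n] ((⇑f)^[M] yp)) ≤ c := by
      intro n
      have ha : (⇑f)^[n] ((⇑f)^[M] yp) = (⇑f)^[M+n] yp := by
        rw [← Function.iterate_add_apply, Nat.add_comm]
      rw [e2 n z, ha]
      have h1 := hfor ((M+n:ℕ):ℤ) (by push_cast; omega)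
      have h2 : dist ((⇑f)^[M+n] yp) (x ((M+n:ℕ):ℤ)) < c/3 := hM1 (M+n) (by omega)
      calc dist ((f.toEquiv ^ (K + ((M+n:ℕ):ℤ))) z) ((⇑f)^[M+n] yp)
          ≤ dist ((f.toEquiv ^ (K + ((M+n:ℕ):ℤ))) z) (x ((M+n:ℕ):ℤ))
            + dist ((⇑f)^[M+n] yp) (x ((M+n:ℕ):ℤ)) := dist_triangle_right _ _ _
        _ ≤ c/3 + c/3 := by linarith
        _ ≤ c := by linarith
    have hasym2 := asymp f hexp _ _ hcmp2
    rw [tends_int_atTop _ (fun _ => dist_nonneg)]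
    intro ε hε
    obtain ⟨Q, hQ⟩ := hasym2 (ε/2) (by positivity)
    obtain ⟨M3, hM3⟩ := hyp (ε/2) (by positivity)
    refine ⟨((M + Q + M3 : ℕ):ℤ), fun i hi => ?_⟩
    set n : ℕ := (i - M).toNat with hn
    have hn1 : i = ((M+n:ℕ):ℤ) := by omega
    have hnQ : Q ≤ n := by omega
    have hfirst : dist ((f.toEquiv ^ (K + i)) z) ((⇑f)^[M+n] yp) < ε/2 := by
      have := hQ n hnQ
      rw [e2 n z, ← Function.iterate_add_apply, Nat.add_comm n M] at this
      rwa [show K + ((M+n:ℕ):ℤ) = K + i from by rw [hn1]] at this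
    have hsecond : dist ((⇑f)^[M+n] yp) (x i) < ε/2 := by
      have := hM3 (M+n) (by omega)
      rwa [show (((M+n:ℕ)):ℤ) = i from hn1.symm] at this
    calc dist ((f.toEquiv ^ (K + i)) z) (x i)
        ≤ dist ((f.toEquiv ^ (K + i)) z) ((⇑f)^[M+n] yp) + dist ((⇑f)^[M+n] yp) (x i) :=
          dist_triangle _ _ _
      _ < ε/2 + ε/2 := add_lt_add hfirst hsecond
      _ = ε := by ring

/-- For a topologically transitive expansive homeomorphism of a compact metric space,
shadowing, limit shadowing and two-sided limit shadowing with a gap are equivalent. -/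
theorem stmt12 [CompactSpace X] (f : X ≃ₜ X)
    (ht : TopologicallyTransitive ⇑f) (he : Expansive f.toEquiv) :
    (ShadowingPropertyZ f.toEquiv ↔ LimitShadowing ⇑f) ∧
    (LimitShadowing ⇑f ↔ TwoSidedLimitShadowingWithGap f.toEquiv) := by
  obtain ⟨c, hc, hexp⟩ := he
  refine ⟨⟨fun hA => A_implies_B f ⟨c, hc, hexp⟩ hA, fun hB => B_implies_A f ht hB⟩,
    fun hB => A_implies_C f ht hc hexp (B_implies_A f ht hB), fun hC => C_implies_B f hC⟩
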